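/- Let Φ(θ¹,θ²) = −√(θ¹θ²) − (1/2)log(−θ²) on Ω = {(θ¹,θ²) ∈ ℝ² : θ¹ < 0, θ² < 0}. Then at every point of Ω: (i) the Hessian of Φ is positive definite (so Φ is strictly convex); (ii) det Hess Φ = √(θ¹θ²) / ( 8 (θ¹)² (θ²)² ); (iii) the Hessian of log det Hess Φ equals the diagonal matrix diag( 3/(2(θ¹)²), 3/(2(θ²)²) ), which is positive definite; consequently the matrix −Hess(log det Hess Φ) is negative definite, i.e. the Kähler manifold 𝕄_InvGau has negative Ricci curvature. -/

import Mathlib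

open Real Matrix

/-- Partial derivative of `f : ℝⁿ → ℝ` in the `i`-th coordinate direction. -/
noncomputable def pd {n : ℕ} (i : Fin n) (f : (Fin n → ℝ) → ℝ) : (Fin n → ℝ) → ℝ :=
  fun x => fderiv ℝ f x (Pi.single i 1)

/-- Hessian matrix of second partial derivatives of `f : ℝⁿ → ℝ`. -/
noncomputable def hessian {n : ℕ} (f : (Fin n → ℝ) → ℝ) (x : Fin n → ℝ) :
    Matrix (Fin n) (Fin n) ℝ :=
  Matrix.of fun i j => pd i (pd j f) x

/-- The log-partition function of the inverse Gaussian family in natural parameters,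
on `Ω = {θ¹ < 0, θ² < 0}`. -/
noncomputable def ΦInvGau (θ : Fin 2 → ℝ) : ℝ :=
  -Real.sqrt (θ 0 * θ 1) - (1 / 2) * Real.log (-(θ 1))

namespace InvGauAux

noncomputable abbrev e (i : Fin 2) : (Fin 2 → ℝ) →L[ℝ] ℝ := ContinuousLinearMap.proj i

lemma he (i : Fin 2) (y : Fin 2 → ℝ) : HasFDerivAt (fun z : Fin 2 → ℝ => z i) (e i) y :=
  (e i).hasFDerivAt

lemma hmul (y : Fin 2 → ℝ) :
    HasFDerivAt (fun z : Fin 2 → ℝ => z 0 * z 1) (y 0 • e 1 + y 1 • e 0) y :=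
  (he 0 y).mul (he 1 y)

lemma ht_pos {y : Fin 2 → ℝ} (h1 : y 0 < 0) (h2 : y 1 < 0) : 0 < y 0 * y 1 :=
  mul_pos_of_neg_of_neg h1 h2

lemma hs_pos {y : Fin 2 → ℝ} (h1 : y 0 < 0) (h2 : y 1 < 0) : 0 < Real.sqrt (y 0 * y 1) :=
  Real.sqrt_pos.2 (ht_pos h1 h2)

lemma hs_sq {y : Fin 2 → ℝ} (h1 : y 0 < 0) (h2 : y 1 < 0) :
    Real.sqrt (y 0 * y 1) ^ 2 = y 0 * y 1 :=
  Real.sq_sqrt (ht_pos h1 h2).le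

/-- derivative of Φ -/
lemma hPhi {y : Fin 2 → ℝ} (h1 : y 0 < 0) (h2 : y 1 < 0) :
    HasFDerivAt ΦInvGau
      (-((1 / (2 * Real.sqrt (y 0 * y 1))) • (y 0 • e 1 + y 1 • e 0))
        - (1 / 2 : ℝ) • ((-(y 1))⁻¹ • (-(e 1)))) y := by
  have hsq : HasFDerivAt (fun z : Fin 2 → ℝ => Real.sqrt (z 0 * z 1))
      ((1 / (2 * Real.sqrt (y 0 * y 1))) • (y 0 • e 1 + y 1 • e 0)) y :=
    (Real.hasDerivAt_sqrt (ht_pos h1 h2).ne').comp_hasFDerivAt y (hmul y)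
  have hlog : HasFDerivAt (fun z : Fin 2 → ℝ => Real.log (-(z 1)))
      ((-(y 1))⁻¹ • (-(e 1))) y :=
    (Real.hasDerivAt_log (by linarith : -(y 1) ≠ 0)).comp_hasFDerivAt (f := fun z : Fin 2 → ℝ => -(z 1)) y (he 1 y).neg
  exact hsq.neg.sub (hlog.const_mul (1 / 2 : ℝ))

lemma single_apply (i j : Fin 2) : (Pi.single j (1:ℝ) : Fin 2 → ℝ) i = if j = i then 1 else 0 := by
  simp [Pi.single_apply, eq_comm]

lemma pd0_Phi {y : Fin 2 → ℝ} (h1 : y 0 < 0) (h2 : y 1 < 0) :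
    pd 0 ΦInvGau y = -(y 1) / (2 * Real.sqrt (y 0 * y 1)) := by
  have h := (hPhi h1 h2).fderiv
  simp only [pd, h]
  simp [ContinuousLinearMap.sub_apply, ContinuousLinearMap.smul_apply,
    ContinuousLinearMap.add_apply, ContinuousLinearMap.neg_apply, single_apply]
  ring

lemma pd1_Phi {y : Fin 2 → ℝ} (h1 : y 0 < 0) (h2 : y 1 < 0) :
    pd 1 ΦInvGau y = -(y 0) / (2 * Real.sqrt (y 0 * y 1)) - 1 / (2 * y 1) := by
  have h := (hPhi h1 h2).fderiv
  simp only [pd, h]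
  simp [ContinuousLinearMap.sub_apply, ContinuousLinearMap.smul_apply,
    ContinuousLinearMap.add_apply, ContinuousLinearMap.neg_apply, single_apply]
  field_simp


/-- closed form of pd 0 Φ -/
noncomputable def g0 (y : Fin 2 → ℝ) : ℝ := -(y 1) / (2 * Real.sqrt (y 0 * y 1))
noncomputable def g1 (y : Fin 2 → ℝ) : ℝ :=
  -(y 0) / (2 * Real.sqrt (y 0 * y 1)) - 1 / (2 * y 1)

lemma ev {θ : Fin 2 → ℝ} (h1 : θ 0 < 0) (h2 : θ 1 < 0) :
    ∀ᶠ y in nhds θ, y 0 < 0 ∧ y 1 < 0 := by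
  have hopen : IsOpen {y : Fin 2 → ℝ | y 0 < 0 ∧ y 1 < 0} :=
    (isOpen_lt (continuous_apply 0) continuous_const).inter
      (isOpen_lt (continuous_apply 1) continuous_const)
  exact Filter.eventually_of_mem (hopen.mem_nhds ⟨h1, h2⟩) (fun y hy => hy)

lemma hq {y : Fin 2 → ℝ} (h1 : y 0 < 0) (h2 : y 1 < 0) :
    HasFDerivAt (fun z : Fin 2 → ℝ => (2 * Real.sqrt (z 0 * z 1))⁻¹)
      ((-((2 * Real.sqrt (y 0 * y 1)) ^ 2)⁻¹) •
        ((2:ℝ) • ((1 / (2 * Real.sqrt (y 0 * y 1))) • (y 0 • e 1 + y 1 • e 0)))) y := by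
  have hsq : HasFDerivAt (fun z : Fin 2 → ℝ => 2 * Real.sqrt (z 0 * z 1))
      ((2:ℝ) • ((1 / (2 * Real.sqrt (y 0 * y 1))) • (y 0 • e 1 + y 1 • e 0))) y :=
    (((Real.hasDerivAt_sqrt (ht_pos h1 h2).ne').comp_hasFDerivAt y (hmul y))).const_mul 2
  exact (hasDerivAt_inv (mul_pos two_pos (hs_pos h1 h2)).ne').comp_hasFDerivAt y hsq

lemma hg0 {y : Fin 2 → ℝ} (h1 : y 0 < 0) (h2 : y 1 < 0) :
    HasFDerivAt g0
      ((-(y 1)) • ((-((2 * Real.sqrt (y 0 * y 1)) ^ 2)⁻¹) •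
          ((2:ℝ) • ((1 / (2 * Real.sqrt (y 0 * y 1))) • (y 0 • e 1 + y 1 • e 0))))
        + (2 * Real.sqrt (y 0 * y 1))⁻¹ • (-(e 1))) y := by
  have := ((he 1 y).neg.mul (hq h1 h2))
  -- this : HasFDerivAt (fun z => -(z 1) * (2*sqrt..)⁻¹) ((-(y 1)) • q' + q y • (-(e 1))) y
  exact this

lemma hg1 {y : Fin 2 → ℝ} (h1 : y 0 < 0) (h2 : y 1 < 0) :
    HasFDerivAt g1
      (((-(y 0)) • ((-((2 * Real.sqrt (y 0 * y 1)) ^ 2)⁻¹) •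
          ((2:ℝ) • ((1 / (2 * Real.sqrt (y 0 * y 1))) • (y 0 • e 1 + y 1 • e 0))))
        + (2 * Real.sqrt (y 0 * y 1))⁻¹ • (-(e 0)))
        - (1/2 : ℝ) • ((-((y 1) ^ 2)⁻¹) • e 1)) y := by
  have ha := ((he 0 y).neg.mul (hq h1 h2))
  have hb : HasFDerivAt (fun z : Fin 2 → ℝ => (1/2 : ℝ) * (z 1)⁻¹)
      ((1/2 : ℝ) • ((-((y 1) ^ 2)⁻¹) • e 1)) y :=
    ((hasDerivAt_inv h2.ne).comp_hasFDerivAt y (he 1 y)).const_mul (1/2)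
  have := ha.sub hb
  have hfun : g1 = (((-fun z : Fin 2 → ℝ => z 0) * fun z => (2 * √(z 0 * z 1))⁻¹) - fun z => 1 / 2 * (z 1)⁻¹) := by
    funext z; simp [g1, div_eq_mul_inv]; ring
  rw [hfun]; exact this


lemma fd_pd0 {θ : Fin 2 → ℝ} (h1 : θ 0 < 0) (h2 : θ 1 < 0) :
    fderiv ℝ (pd 0 ΦInvGau) θ = fderiv ℝ g0 θ :=
  Filter.EventuallyEq.fderiv_eq ((ev h1 h2).mono fun y hy => pd0_Phi hy.1 hy.2)

lemma fd_pd1 {θ : Fin 2 → ℝ} (h1 : θ 0 < 0) (h2 : θ 1 < 0) :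
    fderiv ℝ (pd 1 ΦInvGau) θ = fderiv ℝ g1 θ :=
  Filter.EventuallyEq.fderiv_eq ((ev h1 h2).mono fun y hy => pd1_Phi hy.1 hy.2)

lemma H00 {θ : Fin 2 → ℝ} (h1 : θ 0 < 0) (h2 : θ 1 < 0) :
    pd 0 (pd 0 ΦInvGau) θ = (θ 1) ^ 2 / (4 * Real.sqrt (θ 0 * θ 1) ^ 3) := by
  have h := (hg0 h1 h2).fderiv
  simp only [pd, fd_pd0 h1 h2, h]
  have hs := hs_pos h1 h2
  have hsq := hs_sq h1 h2
  simp [ContinuousLinearMap.add_apply, ContinuousLinearMap.smul_apply,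
    ContinuousLinearMap.neg_apply, single_apply]
  field_simp
  nlinarith [hs, hsq]

lemma H10 {θ : Fin 2 → ℝ} (h1 : θ 0 < 0) (h2 : θ 1 < 0) :
    pd 1 (pd 0 ΦInvGau) θ = -(1 / (4 * Real.sqrt (θ 0 * θ 1))) := by
  have h := (hg0 h1 h2).fderiv
  simp only [pd, fd_pd0 h1 h2, h]
  have hs := hs_pos h1 h2
  have hsq := hs_sq h1 h2
  simp [ContinuousLinearMap.add_apply, ContinuousLinearMap.smul_apply,
    ContinuousLinearMap.neg_apply, single_apply]
  field_simp
  rw [mul_comm (θ 1) (θ 0)]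
  generalize √(θ 0 * θ 1) = S at *
  rw [← hsq]
  field_simp
  ring

lemma H01 {θ : Fin 2 → ℝ} (h1 : θ 0 < 0) (h2 : θ 1 < 0) :
    pd 0 (pd 1 ΦInvGau) θ = -(1 / (4 * Real.sqrt (θ 0 * θ 1))) := by
  have h := (hg1 h1 h2).fderiv
  simp only [pd, fd_pd1 h1 h2, h]
  have hs := hs_pos h1 h2
  have hsq := hs_sq h1 h2
  simp [ContinuousLinearMap.add_apply, ContinuousLinearMap.smul_apply,
    ContinuousLinearMap.sub_apply, ContinuousLinearMap.neg_apply, single_apply]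
  field_simp
  nlinarith [hs, hsq]

lemma H11 {θ : Fin 2 → ℝ} (h1 : θ 0 < 0) (h2 : θ 1 < 0) :
    pd 1 (pd 1 ΦInvGau) θ =
      (θ 0) ^ 2 / (4 * Real.sqrt (θ 0 * θ 1) ^ 3) + 1 / (2 * (θ 1) ^ 2) := by
  have h := (hg1 h1 h2).fderiv
  simp only [pd, fd_pd1 h1 h2, h]
  have hs := hs_pos h1 h2
  have hsq := hs_sq h1 h2
  have h2' : θ 1 ≠ 0 := h2.ne
  have hs' : Real.sqrt (θ 0 * θ 1) ≠ 0 := hs.ne'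
  simp [ContinuousLinearMap.add_apply, ContinuousLinearMap.smul_apply,
    ContinuousLinearMap.sub_apply, ContinuousLinearMap.neg_apply, single_apply]
  field_simp
  nlinarith [hs, hsq, sq_nonneg (θ 1), mul_pos hs hs]

lemma hess_eq {θ : Fin 2 → ℝ} (h1 : θ 0 < 0) (h2 : θ 1 < 0) :
    hessian ΦInvGau θ =
      !![(θ 1) ^ 2 / (4 * Real.sqrt (θ 0 * θ 1) ^ 3), -(1 / (4 * Real.sqrt (θ 0 * θ 1)));
         -(1 / (4 * Real.sqrt (θ 0 * θ 1))),
         (θ 0) ^ 2 / (4 * Real.sqrt (θ 0 * θ 1) ^ 3) + 1 / (2 * (θ 1) ^ 2)] := by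
  ext i j
  fin_cases i <;> fin_cases j <;>
    simp [hessian, H00 h1 h2, H01 h1 h2, H10 h1 h2, H11 h1 h2]


lemma det_eq {θ : Fin 2 → ℝ} (h1 : θ 0 < 0) (h2 : θ 1 < 0) :
    (hessian ΦInvGau θ).det =
      Real.sqrt (θ 0 * θ 1) / (8 * (θ 0) ^ 2 * (θ 1) ^ 2) := by
  rw [hess_eq h1 h2, Matrix.det_fin_two_of]
  have hs := hs_pos h1 h2
  have hsq := hs_sq h1 h2
  have h1' : θ 0 ≠ 0 := h1.ne
  have h2' : θ 1 ≠ 0 := h2.ne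
  have hs' : Real.sqrt (θ 0 * θ 1) ≠ 0 := hs.ne'
  field_simp
  rw [mul_comm (θ 1) (θ 0)]
  generalize √(θ 0 * θ 1) = S at *
  have h4 : θ 1 ^ 2 * θ 0 ^ 2 = S ^ 4 := by rw [show S ^ 4 = (S ^ 2) ^ 2 by ring, hsq]; ring
  rw [h4]
  field_simp
  ring

lemma posDef_fin_two {a b c : ℝ} (ha : 0 < a) (hd : 0 < a * c - b * b) :
    (!![a, b; b, c]).PosDef := by
  refine Matrix.PosDef.of_dotProduct_mulVec_pos ?_ ?_
  · ext i j
    fin_cases i <;> fin_cases j <;> simp [Matrix.conjTranspose_apply]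
  · intro x hx
    have hx' : x 0 ≠ 0 ∨ x 1 ≠ 0 := by
      by_contra hc; push_neg at hc
      exact hx (funext fun i => by fin_cases i <;> simp [hc.1, hc.2])
    have hq : dotProduct (star x) ((!![a, b; b, c]) *ᵥ x) =
        a * (x 0 * x 0) + b * (x 1 * x 0) + (b * (x 0 * x 1) + c * (x 1 * x 1)) := by
      simp [dotProduct, Matrix.mulVec, Fin.sum_univ_two]
      ring
    rw [hq]
    rcases eq_or_ne (x 1) 0 with h | h
    · have h0 : x 0 ≠ 0 := by
        intro h0; exact hx (funext fun i => by fin_cases i <;> simp [h0, h])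
      rw [h]
      nlinarith [mul_self_pos.2 h0, ha]
    · nlinarith [sq_nonneg (a * x 0 + b * x 1), mul_pos hd (mul_self_pos.2 h), ha]

lemma hessPhi_posDef {θ : Fin 2 → ℝ} (h1 : θ 0 < 0) (h2 : θ 1 < 0) :
    (hessian ΦInvGau θ).PosDef := by
  have hdet := det_eq h1 h2
  rw [hess_eq h1 h2] at hdet ⊢
  rw [Matrix.det_fin_two_of] at hdet
  have hs := hs_pos h1 h2
  have h1' : θ 0 ≠ 0 := h1.ne
  have h2' : θ 1 ≠ 0 := h2.ne
  apply posDef_fin_two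
  · positivity
  · have hpos : 0 < Real.sqrt (θ 0 * θ 1) / (8 * (θ 0) ^ 2 * (θ 1) ^ 2) := by positivity
    nlinarith [hdet, hpos]


noncomputable def ψ (y : Fin 2 → ℝ) : ℝ := -(3/2) * Real.log (y 0 * y 1) - Real.log 8

lemma logdet_eq {y : Fin 2 → ℝ} (h1 : y 0 < 0) (h2 : y 1 < 0) :
    Real.log ((hessian ΦInvGau y).det) = ψ y := by
  have ht := ht_pos h1 h2
  have hs' : Real.sqrt (y 0 * y 1) ≠ 0 := (hs_pos h1 h2).ne'
  rw [det_eq h1 h2, ψ,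
    Real.log_div hs' (mul_ne_zero (mul_ne_zero (by norm_num) (pow_ne_zero 2 h1.ne))
      (pow_ne_zero 2 h2.ne)),
    Real.log_sqrt ht.le,
    Real.log_mul (mul_ne_zero (by norm_num) (pow_ne_zero 2 h1.ne)) (pow_ne_zero 2 h2.ne),
    Real.log_mul (by norm_num : (8:ℝ) ≠ 0) (pow_ne_zero 2 h1.ne),
    Real.log_pow, Real.log_pow, Real.log_mul h1.ne h2.ne]
  push_cast
  ring

lemma hpsi {y : Fin 2 → ℝ} (h1 : y 0 < 0) (h2 : y 1 < 0) :
    HasFDerivAt ψ ((-(3/2) : ℝ) • ((y 0 * y 1)⁻¹ • (y 0 • e 1 + y 1 • e 0))) y := by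
  have hlog : HasFDerivAt (fun z : Fin 2 → ℝ => Real.log (z 0 * z 1))
      ((y 0 * y 1)⁻¹ • (y 0 • e 1 + y 1 • e 0)) y :=
    (Real.hasDerivAt_log (ht_pos h1 h2).ne').comp_hasFDerivAt (f := fun z : Fin 2 → ℝ => z 0 * z 1) y (hmul y)
  exact (hlog.const_mul (-(3/2) : ℝ)).sub_const (Real.log 8)

noncomputable def logdetF (y : Fin 2 → ℝ) : ℝ := Real.log ((hessian ΦInvGau y).det)

lemma pd_logdet {y : Fin 2 → ℝ} (h1 : y 0 < 0) (h2 : y 1 < 0) (j : Fin 2) :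
    pd j logdetF y = -(3/2) * (y j)⁻¹ := by
  have hev : logdetF =ᶠ[nhds y] ψ := (ev h1 h2).mono fun z hz => logdet_eq hz.1 hz.2
  have hfd : fderiv ℝ logdetF y = fderiv ℝ ψ y := hev.fderiv_eq
  have h := (hpsi h1 h2).fderiv
  simp only [pd, hfd, h]
  have ht := ht_pos h1 h2
  have h1' : y 0 ≠ 0 := h1.ne
  have h2' : y 1 ≠ 0 := h2.ne
  fin_cases j <;>
    [(simp [ContinuousLinearMap.add_apply, ContinuousLinearMap.smul_apply, single_apply];
      field_simp);
     (simp [ContinuousLinearMap.add_apply, ContinuousLinearMap.smul_apply, single_apply];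
      field_simp)]

noncomputable def k (j : Fin 2) (y : Fin 2 → ℝ) : ℝ := -(3/2) * (y j)⁻¹

lemma hk {y : Fin 2 → ℝ} {j : Fin 2} (hj : y j ≠ 0) :
    HasFDerivAt (k j) ((-(3/2) : ℝ) • ((-((y j) ^ 2)⁻¹) • e j)) y :=
  ((hasDerivAt_inv hj).comp_hasFDerivAt y (he j y)).const_mul (-(3/2) : ℝ)

lemma pd_pd_logdet {θ : Fin 2 → ℝ} (h1 : θ 0 < 0) (h2 : θ 1 < 0) (i j : Fin 2) :
    pd i (pd j logdetF) θ = if i = j then 3 / (2 * (θ j) ^ 2) else 0 := by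
  have hev : pd j logdetF =ᶠ[nhds θ] k j :=
    (ev h1 h2).mono fun z hz => pd_logdet hz.1 hz.2 j
  have hj : θ j ≠ 0 := by fin_cases j <;> [exact h1.ne; exact h2.ne]
  have h := (hk (y := θ) hj).fderiv
  simp only [pd, hev.fderiv_eq, h]
  have hj2 : (θ j) ^ 2 ≠ 0 := pow_ne_zero 2 hj
  rcases eq_or_ne i j with rfl | hij
  · simp [ContinuousLinearMap.smul_apply, single_apply]
    field_simp
  · simp [ContinuousLinearMap.smul_apply, single_apply, hij, (Ne.symm hij)]

lemma hess_logdet {θ : Fin 2 → ℝ} (h1 : θ 0 < 0) (h2 : θ 1 < 0) :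
    hessian logdetF θ = !![3 / (2 * (θ 0) ^ 2), 0; 0, 3 / (2 * (θ 1) ^ 2)] := by
  ext i j
  fin_cases i <;> fin_cases j <;>
    simp [hessian, pd_pd_logdet h1 h2]

end InvGauAux

/-- `𝕄_InvGau` has negative Ricci curvature: the Hessian of the inverse Gaussian
log-partition function is positive definite, has the stated determinant, and the
Hessian of `log det Hess Φ` is the stated positive definite diagonal matrix. -/
theorem invGau_negative_ricci (θ : Fin 2 → ℝ) (h1 : θ 0 < 0) (h2 : θ 1 < 0) :
    (hessian ΦInvGau θ).PosDef ∧
    (hessian ΦInvGau θ).det =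
      Real.sqrt (θ 0 * θ 1) / (8 * (θ 0) ^ 2 * (θ 1) ^ 2) ∧
    hessian (fun y => Real.log ((hessian ΦInvGau y).det)) θ =
      !![3 / (2 * (θ 0) ^ 2), 0; 0, 3 / (2 * (θ 1) ^ 2)] ∧
    (hessian (fun y => Real.log ((hessian ΦInvGau y).det)) θ).PosDef ∧
    (∀ v : Fin 2 → ℝ, v ≠ 0 →
      v ⬝ᵥ ((-(hessian (fun y => Real.log ((hessian ΦInvGau y).det)) θ)) *ᵥ v) < 0) := by
  have hld : hessian (fun y => Real.log ((hessian ΦInvGau y).det)) θ =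
      !![3 / (2 * (θ 0) ^ 2), 0; 0, 3 / (2 * (θ 1) ^ 2)] :=
    InvGauAux.hess_logdet h1 h2
  have h1' : θ 0 ≠ 0 := h1.ne
  have h2' : θ 1 ≠ 0 := h2.ne
  have hldpos : (hessian (fun y => Real.log ((hessian ΦInvGau y).det)) θ).PosDef := by
    rw [hld]
    exact InvGauAux.posDef_fin_two (by positivity) (by norm_num; positivity)
  refine ⟨InvGauAux.hessPhi_posDef h1 h2, InvGauAux.det_eq h1 h2, hld, hldpos, ?_⟩
  intro v hv
  have h := hldpos.dotProduct_mulVec_pos hv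
  simp only [star_trivial] at h
  simp only [Matrix.neg_mulVec, dotProduct_neg]
  linarith
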